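/- arXiv:2202.01806 — 7 statements merged into one kernel-verified Lean document; each statement's English description precedes it below -/
import Mathlib

section
/- Let X_L̄ and X_S be random variables on finite alphabets with strictly positive conditional probabilities P(X_L̄ = x | X_S = s) > 0 for all x, s. Define the mechanism M₁ releasing Y ∈ {0,1} by: given X_L̄ = x and X_S = s, release Y = 1 with probability min_w P(X_L̄ = x | X_S = w) / P(X_L̄ = x | X_S = s) if x = v, and with probability 0 otherwise. Then for all s with P(X_S = s) > 0, P(Y = 1 | X_S = s) = min_w P(X_L̄ = v | X_S = w); in particular Y is independent of X_S. -/
/-- Mechanism M₁ releases Y=1 w.p. (min_w P(X_L̄=x|X_S=w))/P(X_L̄=x|X_S=s)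
if x = v and 0 otherwise.  Then P(Y=1 | X_S=s) = min_w P(X_L̄=v|X_S=w) for every s with
P(X_S=s)>0; in particular Y is independent of X_S. -/
theorem stmt1 {X W : Type} [Fintype X] [Fintype W] [DecidableEq X]
    (q : X → W → ℝ) (π : W → ℝ)
    (hq : ∀ x w, 0 < q x w)
    (hπ : ∀ w, 0 ≤ π w) (hπ1 : ∑ w, π w = 1)
    (hqsum : ∀ w, ∑ x, q x w = 1)
    (v : X) (m : X → ℝ)
    (hm : ∀ x, IsLeast {r | ∃ w, 0 < π w ∧ r = q x w} (m x))
    (μ : X → W → ℝ)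
    (hμ : ∀ x w, μ x w = if x = v then m x / q x w else 0) :
    ∀ s, 0 < π s →
      (∑ x, μ x s * q x s) = m v ∧
      (∑ x, μ x s * q x s) = ∑ s', π s' * ∑ x, μ x s' * q x s' := by
  have key : ∀ s, (∑ x, μ x s * q x s) = m v := by
    intro s
    rw [Finset.sum_eq_single v]
    · rw [hμ, if_pos rfl, div_mul_cancel₀ _ (hq v s).ne']
    · intro x _ hx
      rw [hμ, if_neg hx, zero_mul]
    · intro h; exact absurd (Finset.mem_univ v) h
  intro s _
  refine ⟨key s, ?_⟩
  simp only [key, ← Finset.sum_mul, hπ1, one_mul]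
end

section
/- Let X_L̄ and X_S be as above and define the mechanism M₂ releasing Y = 1 with probability 1 if X_L̄ = v, and with probability 1 − min_w P(X_L̄ = x | X_S = w) / P(X_L̄ = x | X_S = s) if X_L̄ = x ≠ v and X_S = s. Then P(Y = 0 | X_S = s) = Σ_{x ≠ v} min_w P(X_L̄ = x | X_S = w), which does not depend on s; hence Y is independent of X_S. -/
/-- Mechanism M₂ releases Y=1 w.p. 1 if X_L̄ = v, and w.p.
1 − (min_w P(X_L̄=x|X_S=w))/P(X_L̄=x|X_S=s) otherwise.  Then
P(Y=0 | X_S=s) = Σ_{x ≠ v} min_w P(X_L̄=x|X_S=w), independent of s;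
hence Y is independent of X_S. -/
theorem stmt2 {X W : Type} [Fintype X] [Fintype W] [DecidableEq X]
    (q : X → W → ℝ) (π : W → ℝ)
    (hq : ∀ x w, 0 < q x w)
    (hπ : ∀ w, 0 ≤ π w) (hπ1 : ∑ w, π w = 1)
    (hqsum : ∀ w, ∑ x, q x w = 1)
    (v : X) (m : X → ℝ)
    (hm : ∀ x, IsLeast {r | ∃ w, 0 < π w ∧ r = q x w} (m x))
    (μ : X → W → ℝ)
    (hμ : ∀ x w, μ x w = if x = v then 1 else 1 - m x / q x w) :
    ∀ s, 0 < π s →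
      (∑ x, (1 - μ x s) * q x s) = ∑ x ∈ Finset.univ.filter (fun x => x ≠ v), m x ∧
      (∑ x, (1 - μ x s) * q x s) = ∑ s', π s' * ∑ x, (1 - μ x s') * q x s' := by
  have key : ∀ s, (∑ x, (1 - μ x s) * q x s)
      = ∑ x ∈ Finset.univ.filter (fun x => x ≠ v), m x := by
    intro s
    rw [Finset.sum_filter]
    apply Finset.sum_congr rfl
    intro x _
    rw [hμ]
    by_cases h : x = v
    · simp [h]
    · simp only [h, if_false, ne_eq, not_false_iff, if_true]
      field_simp
      rw [sub_sub_cancel, mul_comm, div_mul_cancel₀ _ (hq x s).ne']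
  intro s _
  refine ⟨key s, ?_⟩
  have h2 : ∑ s', π s' * ∑ x, (1 - μ x s') * q x s'
      = ∑ s', π s' * (∑ x ∈ Finset.univ.filter (fun x => x ≠ v), m x) :=
    Finset.sum_congr rfl (fun s' _ => by rw [key s'])
  rw [key s, h2, ← Finset.sum_mul, hπ1, one_mul]
end

section
/- Under mechanism M₁ with the intersection set empty (so that the true answer is A = 1{X_L = v}), the per-user error probability P(Y ≠ A) equals P(X_L = v) − min_w P(X_L = v | X_S = w). -/
/-- For mechanism M₁ with L ∩ S = ∅ and true answer A = 1{X_L = v},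
the per-user error probability P(Y ≠ A) equals P(X_L = v) − min_w P(X_L = v | X_S = w). -/
theorem stmt3 {X W : Type} [Fintype X] [Fintype W] [DecidableEq X]
    (q : X → W → ℝ) (π : W → ℝ)
    (hq : ∀ x w, 0 < q x w)
    (hπ : ∀ w, 0 ≤ π w) (hπ1 : ∑ w, π w = 1)
    (hqsum : ∀ w, ∑ x, q x w = 1)
    (v : X) (m : X → ℝ)
    (hm : ∀ x, IsLeast {r | ∃ w, 0 < π w ∧ r = q x w} (m x))
    (μ : X → W → ℝ)
    (hμ : ∀ x w, μ x w = if x = v then m x / q x w else 0) :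
    (∑ s, π s * ∑ x, q x s * (if x = v then 1 - μ x s else μ x s))
      = (∑ s, π s * q v s) - m v := by
  have h1 : ∀ s, ∑ x, q x s * (if x = v then 1 - μ x s else μ x s) = q v s - m v := by
    intro s
    rw [Finset.sum_eq_single v]
    · rw [hμ]
      simp only [↓reduceIte]
      field_simp [(hq v s).ne']
    · intro x _ hx
      rw [hμ]
      simp [hx]
    · simp
  simp only [h1, mul_sub]
  rw [Finset.sum_sub_distrib, ← Finset.sum_mul, hπ1, one_mul]
end

section
/- Under mechanism M₂ with empty intersection set, the per-user error probability P(Y ≠ A) equals 1 − P(X_L = v) − Σ_{x ≠ v} min_w P(X_L = x | X_S = w), where A = 1{X_L = v}. -/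
/-- For mechanism M₂ with empty intersection set, the per-user error
probability P(Y ≠ A) equals 1 − P(X_L = v) − Σ_{x ≠ v} min_w P(X_L = x | X_S = w). -/
theorem stmt4 {X W : Type} [Fintype X] [Fintype W] [DecidableEq X]
    (q : X → W → ℝ) (π : W → ℝ)
    (hq : ∀ x w, 0 < q x w)
    (hπ : ∀ w, 0 ≤ π w) (hπ1 : ∑ w, π w = 1)
    (hqsum : ∀ w, ∑ x, q x w = 1)
    (v : X) (m : X → ℝ)
    (hm : ∀ x, IsLeast {r | ∃ w, 0 < π w ∧ r = q x w} (m x))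
    (μ : X → W → ℝ)
    (hμ : ∀ x w, μ x w = if x = v then 1 else 1 - m x / q x w) :
    (∑ s, π s * ∑ x, q x s * (if x = v then 1 - μ x s else μ x s))
      = 1 - (∑ s, π s * q v s) - ∑ x ∈ Finset.univ.filter (fun x => x ≠ v), m x := by
  set M := ∑ x ∈ Finset.univ.filter (fun x => x ≠ v), m x with hM
  have key : ∀ s, (∑ x, q x s * (if x = v then 1 - μ x s else μ x s))
      = (1 - q v s) - M := by
    intro s
    have h1 : ∀ x, q x s * (if x = v then 1 - μ x s else μ x s)
        = (if x = v then 0 else q x s - m x) := by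
      intro x
      by_cases hx : x = v
      · simp [hx, hμ]
      · have hne : q x s ≠ 0 := (hq x s).ne'
        rw [if_neg hx, if_neg hx, hμ, if_neg hx]
        field_simp
    rw [Finset.sum_congr rfl fun x _ => h1 x]
    rw [Finset.sum_ite, Finset.sum_const_zero, zero_add]
    have h2 : (∑ x ∈ Finset.univ.filter (fun x => ¬ x = v), (q x s - m x))
        = (∑ x ∈ Finset.univ.filter (fun x => x ≠ v), q x s) - M := by
      rw [hM, ← Finset.sum_sub_distrib]
    have h3 : (∑ x ∈ Finset.univ.filter (fun x => x ≠ v), q x s) = 1 - q v s := by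
      have := Finset.sum_filter_add_sum_filter_not Finset.univ (fun x => x = v)
        (fun x => q x s)
      rw [Finset.sum_filter] at this
      simp only [Finset.sum_ite_eq', Finset.mem_univ, if_true] at this
      have h4 : (∑ x, q x s) = 1 := hqsum s
      linarith [this.trans h4]
    rw [h2, h3]
  calc (∑ s, π s * ∑ x, q x s * (if x = v then 1 - μ x s else μ x s))
      = ∑ s, (π s * 1 - π s * q v s - π s * M) := by
        apply Finset.sum_congr rfl
        intro s _
        rw [key s]; ring
    _ = 1 - (∑ s, π s * q v s) - M := by
        rw [Finset.sum_sub_distrib, Finset.sum_sub_distrib, ← Finset.sum_mul]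
        rw [← Finset.sum_mul, hπ1, one_mul]
        ring
end

section
/- Let A ∈ {0,1} be a binary random variable and Y any random variable with Y independent of a random variable X_S, and suppose A is a function of a random vector X with X_S a subvector. Then the error probability P_e of any estimator Y of A satisfies h(P_e) ≥ H(A) − H(A | X_S), where h is the binary entropy function, provided the mechanism Y satisfies the perfect-privacy constraint that Y is independent of X_S and A—Y forms a channel through X (S → X → Y Markov chain). -/
open Finset

/-- Binary entropy function. -/
noncomputable def binEnt (p : ℝ) : ℝ := -(p * Real.log p) - (1 - p) * Real.log (1 - p)

lemma binEnt_eq : binEnt = Real.binEntropy := by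
  funext p
  simp [binEnt, Real.binEntropy, Real.log_inv]
  ring

lemma entSplit (b c : ℝ) (hb : 0 ≤ b) (hc : 0 ≤ c) :
    (b + c) * binEnt (b / (b + c)) =
      Real.negMulLog b + Real.negMulLog c - Real.negMulLog (b + c) := by
  rcases eq_or_lt_of_le (add_nonneg hb hc) with h | h
  · have hb0 : b = 0 := by linarith [hb, hc, h.symm ▸ (by linarith : b + c = 0)]
    have hc0 : c = 0 := by linarith [h.symm ▸ (by linarith : b + c = 0)]
    simp [hb0, hc0, binEnt]
  · have ht : b + c ≠ 0 := ne_of_gt h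
    have h1 : 1 - b / (b + c) = c / (b + c) := by field_simp; ring
    have lb : -(b * Real.log (b / (b+c))) = Real.negMulLog b + b * Real.log (b+c) := by
      rcases eq_or_lt_of_le hb with hb0 | hb0
      · simp [← hb0, Real.negMulLog]
      · rw [Real.log_div (ne_of_gt hb0) ht, Real.negMulLog]; ring
    have lc : -(c * Real.log (c / (b+c))) = Real.negMulLog c + c * Real.log (b+c) := by
      rcases eq_or_lt_of_le hc with hc0 | hc0
      · simp [← hc0, Real.negMulLog]
      · rw [Real.log_div (ne_of_gt hc0) ht, Real.negMulLog]; ring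
    have : (b + c) * binEnt (b / (b + c))
        = -(b * Real.log (b / (b+c))) - (c * Real.log (c / (b+c))) := by
      rw [binEnt, h1]; field_simp
    simp only [Real.negMulLog] at lb lc ⊢
    rw [this]
    linear_combination lb + lc

lemma pointwise (Q SA AY A S Y : ℝ) (hQ : 0 ≤ Q)
    (h1 : Q ≤ SA) (h2 : Q ≤ AY) (h3 : Q ≤ A) (h4 : Q ≤ S) (h5 : Q ≤ Y)
    (h6 : Q ≤ S * Y) :
    Q - SA * AY / A ≤
      Q * (Real.log Y + Real.log A + Real.log S - Real.log AY - Real.log SA) := by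
  rcases eq_or_lt_of_le hQ with h0 | h0
  · have : 0 ≤ SA * AY / A := div_nonneg (mul_nonneg (h0 ▸ h1) (h0 ▸ h2)) (h0 ▸ h3)
    simp [← h0]
    linarith
  · have hSA : 0 < SA := lt_of_lt_of_le h0 h1
    have hAY : 0 < AY := lt_of_lt_of_le h0 h2
    have hA : 0 < A := lt_of_lt_of_le h0 h3
    have hS : 0 < S := lt_of_lt_of_le h0 h4
    have hY : 0 < Y := lt_of_lt_of_le h0 h5
    have hm : 0 < SA * AY / A := div_pos (mul_pos hSA hAY) hA
    set m := SA * AY / A with hm_def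
    have key1 : Real.log (m / Q) ≤ m / Q - 1 :=
      Real.log_le_sub_one_of_pos (div_pos hm h0)
    have key1' : Q * Real.log (m / Q) ≤ m - Q := by
      have h := mul_le_mul_of_nonneg_left key1 hQ
      have e : Q * (m / Q - 1) = m - Q := by field_simp
      linarith [e ▸ h]
    have key2 : Real.log (Q / (S * Y)) ≤ 0 :=
      Real.log_nonpos (by positivity) (by
        rw [div_le_one (by positivity)]; exact h6)
    have key2' : Q * Real.log (Q / (S * Y)) ≤ 0 :=
      mul_nonpos_iff.2 (Or.inl ⟨le_of_lt h0, key2⟩)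
    have idm : Real.log (m / Q) = Real.log SA + Real.log AY - Real.log A - Real.log Q := by
      rw [hm_def, Real.log_div (by positivity) (ne_of_gt h0),
        Real.log_div (by positivity) (ne_of_gt hA),
        Real.log_mul (ne_of_gt hSA) (ne_of_gt hAY)]
      try ring
    have idq : Real.log (Q / (S * Y)) = Real.log Q - Real.log S - Real.log Y := by
      rw [Real.log_div (ne_of_gt h0) (by positivity),
        Real.log_mul (ne_of_gt hS) (ne_of_gt hY)]
      try ring
    have ident : Q * (Real.log Y + Real.log A + Real.log S - Real.log AY - Real.log SA)
        = -(Q * Real.log (m / Q)) - Q * Real.log (Q / (S * Y)) := by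
      rw [idm, idq]; ring
    rw [ident]
    linarith

lemma core {S : Type} [Fintype S] (q : S → Bool → Bool → ℝ)
    (hq : ∀ s a y, 0 ≤ q s a y)
    (hsum : ∑ s, ∑ a, ∑ y, q s a y = 1)
    (hpriv : ∀ s y, ∑ a, q s a y = (∑ s', ∑ a, q s' a y) * (∑ a, ∑ y', q s a y')) :
    binEnt (∑ s, (q s true false + q s false true))
      ≥ binEnt (∑ s, ∑ y, q s true y)
        - ∑ s, (∑ a, ∑ y, q s a y) * binEnt ((∑ y, q s true y) / (∑ a, ∑ y, q s a y)) := by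
  classical
  -- marginals
  set qS : S → ℝ := fun s => ∑ a, ∑ y, q s a y with hqS_def
  set qY : Bool → ℝ := fun y => ∑ s, ∑ a, q s a y with hqY_def
  set qA : Bool → ℝ := fun a => ∑ s, ∑ y, q s a y with hqA_def
  set qSA : S → Bool → ℝ := fun s a => ∑ y, q s a y with hqSA_def
  set qAY : Bool → Bool → ℝ := fun a y => ∑ s, q s a y with hqAY_def
  have hqS0 : ∀ s, 0 ≤ qS s := fun s => by
    apply Finset.sum_nonneg; intros; apply Finset.sum_nonneg; intros; apply hq
  have hqY0 : ∀ y, 0 ≤ qY y := fun y => by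
    apply Finset.sum_nonneg; intros; apply Finset.sum_nonneg; intros; apply hq
  have hqA0 : ∀ a, 0 ≤ qA a := fun a => by
    apply Finset.sum_nonneg; intros; apply Finset.sum_nonneg; intros; apply hq
  have hqSA0 : ∀ s a, 0 ≤ qSA s a := fun s a => by
    apply Finset.sum_nonneg; intros; apply hq
  have hqAY0 : ∀ a y, 0 ≤ qAY a y := fun a y => by
    apply Finset.sum_nonneg; intros; apply hq
  -- Bool sum expansions
  have hbool : ∀ f : Bool → ℝ, ∑ b, f b = f true + f false := fun f => by
    simp [Fintype.sum_bool]
  -- basic marginal identities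
  have hSA_S : ∀ s, qSA s true + qSA s false = qS s := fun s => by
    rw [hqS_def]; simp only []; rw [hbool (fun a => ∑ y, q s a y)]
  have hAY_Y : ∀ y, qAY true y + qAY false y = qY y := fun y => by
    rw [hqY_def]; simp only []
    rw [Finset.sum_comm, hbool (fun a => ∑ s, q s a y)]
  have hA_one : qA true + qA false = 1 := by
    rw [hqA_def]; simp only []
    rw [← hbool (fun a => ∑ s, ∑ y, q s a y), Finset.sum_comm, hsum]
  have hY_one : qY true + qY false = 1 := by
    rw [hqY_def]; simp only []
    rw [← hbool (fun y => ∑ s, ∑ a, q s a y)]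
    rw [show (∑ y, ∑ s, ∑ a : Bool, q s a y) = ∑ s, ∑ a, ∑ y, q s a y from by
      rw [Finset.sum_comm]
      exact Finset.sum_congr rfl fun s _ => Finset.sum_comm, hsum]
  have hSA_A : ∀ a, ∑ s, qSA s a = qA a := fun a => rfl
  have hAY_A : ∀ a, ∑ y, qAY a y = qA a := fun a => by
    rw [hqAY_def, hqA_def]; simp only []; exact Finset.sum_comm
  -- independence
  have hindep : ∀ s y, q s true y + q s false y = qY y * qS s := fun s y => by
    have := hpriv s y
    rw [hbool (fun a => q s a y)] at this
    exact this
  have hqSs : ∀ s, (∑ a, ∑ y, q s a y) = qS s := fun _ => rfl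
  have hqSAs : ∀ s a, (∑ y, q s a y) = qSA s a := fun _ _ => rfl
  have hqAYs : ∀ a y, (∑ s, q s a y) = qAY a y := fun _ _ => rfl
  have hqAs : ∀ a, (∑ s, ∑ y, q s a y) = qA a := fun _ => rfl
  have hqYs : ∀ y, (∑ s, ∑ a, q s a y) = qY y := fun _ => rfl
  -- single ≤ marginal bounds
  have hb_SA : ∀ s a y, q s a y ≤ qSA s a := fun s a y => by
    rw [← hqSAs]
    exact Finset.single_le_sum (fun y' _ => hq s a y') (mem_univ y)
  have hb_AY : ∀ s a y, q s a y ≤ qAY a y := fun s a y => by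
    rw [← hqAYs]
    exact Finset.single_le_sum (fun s' _ => hq s' a y) (mem_univ s)
  have hb_A : ∀ s a y, q s a y ≤ qA a := fun s a y => by
    calc q s a y ≤ qSA s a := hb_SA s a y
    _ ≤ qA a := by
        rw [← hSA_A a]
        exact Finset.single_le_sum (fun s' _ => hqSA0 s' a) (mem_univ s)
  have hb_S : ∀ s a y, q s a y ≤ qS s := fun s a y => by
    calc q s a y ≤ qSA s a := hb_SA s a y
    _ ≤ qS s := by
        rw [← hSA_S s]
        rcases a with _ | _ <;> simp <;> linarith [hqSA0 s true, hqSA0 s false]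
  have hb_Y : ∀ s a y, q s a y ≤ qY y := fun s a y => by
    calc q s a y ≤ qAY a y := hb_AY s a y
    _ ≤ qY y := by
        rw [← hAY_Y y]
        rcases a with _ | _ <;> simp <;> linarith [hqAY0 true y, hqAY0 false y]
  have hb_SY : ∀ s a y, q s a y ≤ qS s * qY y := fun s a y => by
    have h := hindep s y
    have : q s a y ≤ q s true y + q s false y := by
      rcases a with _ | _ <;> simp <;> linarith [hq s true y, hq s false y]
    rw [h] at this
    linarith
  -- RHS entropy rewrites
  have hbinA : binEnt (∑ s, ∑ y, q s true y)
      = Real.negMulLog (qA true) + Real.negMulLog (qA false) := by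
    have h := entSplit (qA true) (qA false) (hqA0 true) (hqA0 false)
    rw [hA_one] at h
    simp only [div_one, one_mul, Real.negMulLog_one, sub_zero] at h
    exact h
  have hbinS : ∀ s, qS s * binEnt (qSA s true / qS s)
      = Real.negMulLog (qSA s true) + Real.negMulLog (qSA s false)
        - Real.negMulLog (qS s) := fun s => by
    have h := entSplit (qSA s true) (qSA s false) (hqSA0 s true) (hqSA0 s false)
    rw [hSA_S s] at h
    exact h
  -- Fano step
  have hPe : (∑ s, (q s true false + q s false true))
      = qAY true false + qAY false true := by
    rw [Finset.sum_add_distrib, hqAYs, hqAYs]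
  have fano : binEnt (∑ s, (q s true false + q s false true)) ≥
      ((Real.negMulLog (qAY true true) + Real.negMulLog (qAY false true)
          - Real.negMulLog (qY true))
        + (Real.negMulLog (qAY true false) + Real.negMulLog (qAY false false)
          - Real.negMulLog (qY false))) := by
    have hr1 : (qAY false true / qY true) ∈ Set.Icc (0:ℝ) 1 := by
      constructor
      · exact div_nonneg (hqAY0 false true) (hqY0 true)
      · apply div_le_one_of_le₀
        · linarith [hAY_Y true, hqAY0 true true]
        · exact hqY0 true
    have hr2 : (qAY true false / qY false) ∈ Set.Icc (0:ℝ) 1 := by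
      constructor
      · exact div_nonneg (hqAY0 true false) (hqY0 false)
      · apply div_le_one_of_le₀
        · linarith [hAY_Y false, hqAY0 false false]
        · exact hqY0 false
    have conc := (Real.strictConcave_binEntropy.concaveOn).2 hr1 hr2
      (hqY0 true) (hqY0 false) hY_one
    have hc1 : qY true * (qAY false true / qY true) = qAY false true := by
      rcases eq_or_lt_of_le (hqY0 true) with h0 | h0
      · have : qAY false true = 0 := le_antisymm (by linarith [hAY_Y true, hqAY0 true true]) (hqAY0 false true)
        rw [this, ← h0]; ring
      · field_simp
    have hc2 : qY false * (qAY true false / qY false) = qAY true false := by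
      rcases eq_or_lt_of_le (hqY0 false) with h0 | h0
      · have : qAY true false = 0 := le_antisymm (by linarith [hAY_Y false, hqAY0 false false]) (hqAY0 true false)
        rw [this, ← h0]; ring
      · field_simp
    have e1 : qY true * binEnt (qAY false true / qY true)
        = Real.negMulLog (qAY true true) + Real.negMulLog (qAY false true)
          - Real.negMulLog (qY true) := by
      have h := entSplit (qAY false true) (qAY true true) (hqAY0 false true) (hqAY0 true true)
      rw [show qAY false true + qAY true true = qY true from by linarith [hAY_Y true]] at h
      linarith [h]
    have e2 : qY false * binEnt (qAY true false / qY false)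
        = Real.negMulLog (qAY true false) + Real.negMulLog (qAY false false)
          - Real.negMulLog (qY false) := by
      have h := entSplit (qAY true false) (qAY false false) (hqAY0 true false) (hqAY0 false false)
      rw [show qAY true false + qAY false false = qY false from by linarith [hAY_Y false]] at h
      linarith [h]
    rw [hPe]
    simp only [smul_eq_mul] at conc
    rw [hc1, hc2] at conc
    rw [binEnt_eq] at e1 e2 ⊢
    calc ((Real.negMulLog (qAY true true) + Real.negMulLog (qAY false true)
          - Real.negMulLog (qY true))
        + (Real.negMulLog (qAY true false) + Real.negMulLog (qAY false false)
          - Real.negMulLog (qY false)))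
        = qY true * Real.binEntropy (qAY false true / qY true)
          + qY false * Real.binEntropy (qAY true false / qY false) := by
          linarith [e1, e2]
      _ ≤ Real.binEntropy (qAY false true + qAY true false) := conc
      _ = Real.binEntropy (qAY true false + qAY false true) := by rw [add_comm]
  -- entropy sum expansions
  have ES : ∑ s, ∑ a, ∑ y, q s a y * Real.log (qS s) = -∑ s, Real.negMulLog (qS s) := by
    rw [← Finset.sum_neg_distrib]
    refine Finset.sum_congr rfl fun s _ => ?_
    simp only [← Finset.sum_mul]
    rw [hqSs, Real.negMulLog]; ring
  have EA : ∑ s, ∑ a, ∑ y, q s a y * Real.log (qA a) = -∑ a, Real.negMulLog (qA a) := by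
    rw [Finset.sum_comm, ← Finset.sum_neg_distrib]
    refine Finset.sum_congr rfl fun a _ => ?_
    simp only [← Finset.sum_mul]
    rw [hqAs, Real.negMulLog]; ring
  have EY : ∑ s, ∑ a, ∑ y, q s a y * Real.log (qY y) = -∑ y, Real.negMulLog (qY y) := by
    have h1 : ∑ s, ∑ a, ∑ y, q s a y * Real.log (qY y)
        = ∑ y, ∑ s, ∑ a, q s a y * Real.log (qY y) := by
      calc ∑ s, ∑ a, ∑ y, q s a y * Real.log (qY y)
          = ∑ s, ∑ y, ∑ a, q s a y * Real.log (qY y) :=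
            Finset.sum_congr rfl fun s _ => Finset.sum_comm
        _ = ∑ y, ∑ s, ∑ a, q s a y * Real.log (qY y) := Finset.sum_comm
    rw [h1, ← Finset.sum_neg_distrib]
    refine Finset.sum_congr rfl fun y _ => ?_
    simp only [← Finset.sum_mul]
    rw [hqYs, Real.negMulLog]; ring
  have ESA : ∑ s, ∑ a, ∑ y, q s a y * Real.log (qSA s a)
      = -∑ s, ∑ a, Real.negMulLog (qSA s a) := by
    rw [← Finset.sum_neg_distrib]
    refine Finset.sum_congr rfl fun s _ => ?_
    rw [← Finset.sum_neg_distrib]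
    refine Finset.sum_congr rfl fun a _ => ?_
    rw [← Finset.sum_mul, hqSAs, Real.negMulLog]; ring
  have EAY : ∑ s, ∑ a, ∑ y, q s a y * Real.log (qAY a y)
      = -∑ y, ∑ a, Real.negMulLog (qAY a y) := by
    have h1 : ∑ s, ∑ a, ∑ y, q s a y * Real.log (qAY a y)
        = ∑ y, ∑ a, ∑ s, q s a y * Real.log (qAY a y) := by
      calc ∑ s, ∑ a, ∑ y, q s a y * Real.log (qAY a y)
          = ∑ s, ∑ y, ∑ a, q s a y * Real.log (qAY a y) :=
            Finset.sum_congr rfl fun s _ => Finset.sum_comm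
        _ = ∑ y, ∑ s, ∑ a, q s a y * Real.log (qAY a y) := Finset.sum_comm
        _ = ∑ y, ∑ a, ∑ s, q s a y * Real.log (qAY a y) :=
            Finset.sum_congr rfl fun y _ => Finset.sum_comm
    rw [h1, ← Finset.sum_neg_distrib]
    refine Finset.sum_congr rfl fun y _ => ?_
    rw [← Finset.sum_neg_distrib]
    refine Finset.sum_congr rfl fun a _ => ?_
    rw [← Finset.sum_mul, hqAYs, Real.negMulLog]; ring
  -- the big expansion
  have expand : ∑ s, ∑ a, ∑ y, q s a y *
        (Real.log (qY y) + Real.log (qA a) + Real.log (qS s)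
          - Real.log (qAY a y) - Real.log (qSA s a))
      = ((∑ y, ∑ a, Real.negMulLog (qAY a y)) - ∑ y, Real.negMulLog (qY y))
        - (∑ a, Real.negMulLog (qA a))
        + ((∑ s, ∑ a, Real.negMulLog (qSA s a)) - ∑ s, Real.negMulLog (qS s)) := by
    simp only [mul_add, mul_sub, Finset.sum_add_distrib, Finset.sum_sub_distrib]
    rw [ES, EA, EY, ESA, EAY]
    ring
  -- bound on the auxiliary measure m
  have hmsum : ∑ s, ∑ a, ∑ y, qSA s a * qAY a y / qA a ≤ 1 := by
    rw [Finset.sum_comm]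
    have per_a : ∀ a, ∑ s, ∑ y, qSA s a * qAY a y / qA a ≤ qA a := by
      intro a
      have inner : ∀ s, ∑ y, qSA s a * qAY a y / qA a = qSA s a / qA a * qA a := fun s => by
        calc ∑ y, qSA s a * qAY a y / qA a
            = ∑ y, qSA s a / qA a * qAY a y :=
              Finset.sum_congr rfl fun y _ => by ring
          _ = qSA s a / qA a * ∑ y, qAY a y := by rw [Finset.mul_sum]
          _ = qSA s a / qA a * qA a := by rw [hAY_A]
      rw [Finset.sum_congr rfl fun s _ => inner s]
      have : ∑ s, qSA s a / qA a * qA a = (∑ s, qSA s a) / qA a * qA a := by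
        rw [← Finset.sum_mul, ← Finset.sum_div]
      rw [this, hSA_A]
      rcases eq_or_lt_of_le (hqA0 a) with h0 | h0
      · rw [← h0]; simp
      · rw [div_self (ne_of_gt h0), one_mul]
    calc ∑ a, ∑ s, ∑ y, qSA s a * qAY a y / qA a
        ≤ ∑ a, qA a := Finset.sum_le_sum fun a _ => per_a a
      _ = 1 := by rw [hbool (fun a => qA a)]; exact hA_one
  -- D ≥ 0
  have hD : 0 ≤ ((∑ y, ∑ a, Real.negMulLog (qAY a y)) - ∑ y, Real.negMulLog (qY y))
        - (∑ a, Real.negMulLog (qA a))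
        + ((∑ s, ∑ a, Real.negMulLog (qSA s a)) - ∑ s, Real.negMulLog (qS s)) := by
    rw [← expand]
    have hlow : ∑ s, ∑ a, ∑ y, (q s a y - qSA s a * qAY a y / qA a)
        ≤ ∑ s, ∑ a, ∑ y, q s a y *
          (Real.log (qY y) + Real.log (qA a) + Real.log (qS s)
            - Real.log (qAY a y) - Real.log (qSA s a)) :=
      Finset.sum_le_sum fun s _ => Finset.sum_le_sum fun a _ => Finset.sum_le_sum fun y _ =>
        pointwise (q s a y) (qSA s a) (qAY a y) (qA a) (qS s) (qY y) (hq s a y)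
          (hb_SA s a y) (hb_AY s a y) (hb_A s a y) (hb_S s a y) (hb_Y s a y) (hb_SY s a y)
    have hsplit : ∑ s, ∑ a, ∑ y, (q s a y - qSA s a * qAY a y / qA a)
        = 1 - ∑ s, ∑ a, ∑ y, qSA s a * qAY a y / qA a := by
      simp only [Finset.sum_sub_distrib]
      rw [hsum]
    rw [hsplit] at hlow
    linarith [hmsum]
  -- assemble
  have hgoal2 : ((Real.negMulLog (qAY true true) + Real.negMulLog (qAY false true)
        - Real.negMulLog (qY true))
      + (Real.negMulLog (qAY true false) + Real.negMulLog (qAY false false)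
        - Real.negMulLog (qY false)))
      ≥ (Real.negMulLog (qA true) + Real.negMulLog (qA false))
        - ∑ s, (Real.negMulLog (qSA s true) + Real.negMulLog (qSA s false)
            - Real.negMulLog (qS s)) := by
    have e1 : ∑ y, ∑ a, Real.negMulLog (qAY a y)
        = (Real.negMulLog (qAY true true) + Real.negMulLog (qAY false true))
          + (Real.negMulLog (qAY true false) + Real.negMulLog (qAY false false)) := by
      rw [hbool (fun y => ∑ a, Real.negMulLog (qAY a y)),
        hbool (fun a => Real.negMulLog (qAY a true)),
        hbool (fun a => Real.negMulLog (qAY a false))]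
    have e2 : ∑ y, Real.negMulLog (qY y)
        = Real.negMulLog (qY true) + Real.negMulLog (qY false) := hbool _
    have e3 : ∑ a, Real.negMulLog (qA a)
        = Real.negMulLog (qA true) + Real.negMulLog (qA false) := hbool _
    have e4 : ∑ s, ∑ a, Real.negMulLog (qSA s a)
        = ∑ s, (Real.negMulLog (qSA s true) + Real.negMulLog (qSA s false)) :=
      Finset.sum_congr rfl fun s _ => hbool _
    have e5 : ∑ s, (Real.negMulLog (qSA s true) + Real.negMulLog (qSA s false)
          - Real.negMulLog (qS s))
        = (∑ s, ∑ a, Real.negMulLog (qSA s a)) - ∑ s, Real.negMulLog (qS s) := by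
      rw [Finset.sum_sub_distrib, e4]
    rw [e5]
    linarith [hD, e1, e2, e3]
  have hSsum : ∑ s, qS s * binEnt (qSA s true / qS s)
      = ∑ s, (Real.negMulLog (qSA s true) + Real.negMulLog (qSA s false)
          - Real.negMulLog (qS s)) :=
    Finset.sum_congr rfl fun s _ => hbinS s
  calc binEnt (∑ s, (q s true false + q s false true))
      ≥ _ := fano
    _ ≥ (Real.negMulLog (qA true) + Real.negMulLog (qA false))
        - ∑ s, (Real.negMulLog (qSA s true) + Real.negMulLog (qSA s false)
            - Real.negMulLog (qS s)) := hgoal2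
    _ = binEnt (∑ s, ∑ y, q s true y)
        - ∑ s, (∑ a, ∑ y, q s a y) * binEnt ((∑ y, q s true y) / (∑ a, ∑ y, q s a y)) := by
        rw [hbinA, ← hSsum]

/-- Fano-type lower bound: for binary A = α(X), released (binary) answer Y
with joint pmf p over (X, Y), if Y is independent of the sensitive subvector X_S = σ(X)
(perfect privacy; the Markov chain X_S → X → Y holds since X_S is a function of X), then
h(P_e) ≥ H(A) − H(A | X_S), where P_e = P(Y ≠ A) and h is binary entropy. -/
theorem stmt7 {Ξ S : Type} [Fintype Ξ] [Fintype S] [DecidableEq S]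
    (p : Ξ → Bool → ℝ) (σ : Ξ → S) (α : Ξ → Bool)
    (hp : ∀ x y, 0 ≤ p x y) (hsum : ∑ x, ∑ y, p x y = 1)
    (hpriv : ∀ (y : Bool) (s : S),
      (∑ x ∈ univ.filter (fun x => σ x = s), p x y)
        = (∑ x, p x y) * (∑ x ∈ univ.filter (fun x => σ x = s), ∑ y', p x y')) :
    binEnt (∑ x, ∑ y, if y ≠ α x then p x y else 0)
      ≥ binEnt (∑ x ∈ univ.filter (fun x => α x = true), ∑ y, p x y)
        - ∑ s, (∑ x ∈ univ.filter (fun x => σ x = s), ∑ y, p x y) *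
            binEnt ((∑ x ∈ univ.filter (fun x => σ x = s ∧ α x = true), ∑ y, p x y)
              / (∑ x ∈ univ.filter (fun x => σ x = s), ∑ y, p x y)) := by
  classical
  set q : S → Bool → Bool → ℝ :=
    fun s a y => ∑ x ∈ univ.filter (fun x => σ x = s ∧ α x = a), p x y with hq_def
  -- fiber decomposition lemmas
  have boolfib : ∀ (t : Finset Ξ) (g : Ξ → ℝ),
      ∑ a : Bool, ∑ x ∈ t.filter (fun x => α x = a), g x = ∑ x ∈ t, g x := by
    intro t g
    rw [Fintype.sum_bool]
    have e : (t.filter fun x => α x = false) = t.filter (fun x => ¬ α x = true) := by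
      apply Finset.filter_congr; intro x _; simp
    rw [e]
    exact Finset.sum_filter_add_sum_filter_not t _ g
  have sigfib : ∀ (t : Finset Ξ) (g : Ξ → ℝ),
      ∑ s, ∑ x ∈ t.filter (fun x => σ x = s), g x = ∑ x ∈ t, g x := fun t g =>
    Finset.sum_fiberwise_of_maps_to (fun x _ => mem_univ (σ x)) g
  have Ffib : ∀ (g : Ξ → ℝ) (s : S),
      ∑ a, ∑ x ∈ univ.filter (fun x => σ x = s ∧ α x = a), g x
        = ∑ x ∈ univ.filter (fun x => σ x = s), g x := by
    intro g s
    have e : ∀ a : Bool, univ.filter (fun x => σ x = s ∧ α x = a)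
        = (univ.filter (fun x => σ x = s)).filter (fun x => α x = a) := by
      intro a; rw [Finset.filter_filter]
    calc ∑ a, ∑ x ∈ univ.filter (fun x => σ x = s ∧ α x = a), g x
        = ∑ a, ∑ x ∈ (univ.filter (fun x => σ x = s)).filter (fun x => α x = a), g x :=
          Finset.sum_congr rfl fun a _ => by rw [e a]
      _ = ∑ x ∈ univ.filter (fun x => σ x = s), g x := boolfib _ g
  have allfib : ∀ g : Ξ → ℝ,
      ∑ s, ∑ a, ∑ x ∈ univ.filter (fun x => σ x = s ∧ α x = a), g x = ∑ x, g x := by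
    intro g
    rw [Finset.sum_congr rfl (fun s (_ : s ∈ univ) => Ffib g s)]
    exact sigfib univ g
  have αfib : ∀ g : Ξ → ℝ,
      ∑ s, ∑ x ∈ univ.filter (fun x => σ x = s ∧ α x = true), g x
        = ∑ x ∈ univ.filter (fun x => α x = true), g x := by
    intro g
    have e : ∀ s, univ.filter (fun x => σ x = s ∧ α x = true)
        = (univ.filter (fun x => α x = true)).filter (fun x => σ x = s) := by
      intro s
      rw [Finset.filter_filter]
      apply Finset.filter_congr; intro x _; constructor
      · rintro ⟨h1, h2⟩; exact ⟨h2, h1⟩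
      · rintro ⟨h1, h2⟩; exact ⟨h2, h1⟩
    rw [Finset.sum_congr rfl (fun s (_ : s ∈ univ) => by rw [e s])]
    exact sigfib _ g
  have qsum : ∀ s a, ∑ y, q s a y
      = ∑ x ∈ univ.filter (fun x => σ x = s ∧ α x = a), ∑ y, p x y := fun s a =>
    Finset.sum_comm
  -- hypotheses of core
  have hq' : ∀ s a y, 0 ≤ q s a y := fun s a y =>
    Finset.sum_nonneg fun x _ => hp x y
  have hsum' : ∑ s, ∑ a, ∑ y, q s a y = 1 := by
    calc ∑ s, ∑ a, ∑ y, q s a y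
        = ∑ s, ∑ a, ∑ x ∈ univ.filter (fun x => σ x = s ∧ α x = a), ∑ y, p x y :=
          Finset.sum_congr rfl fun s _ => Finset.sum_congr rfl fun a _ => qsum s a
      _ = ∑ x, ∑ y, p x y := allfib _
      _ = 1 := hsum
  have hpriv' : ∀ s y, ∑ a, q s a y
      = (∑ s', ∑ a, q s' a y) * (∑ a, ∑ y', q s a y') := by
    intro s y
    have l1 : ∑ a, q s a y = ∑ x ∈ univ.filter (fun x => σ x = s), p x y := Ffib _ s
    have l2 : ∑ s', ∑ a, q s' a y = ∑ x, p x y := allfib _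
    have l3 : ∑ a, ∑ y', q s a y'
        = ∑ x ∈ univ.filter (fun x => σ x = s), ∑ y', p x y' := by
      calc ∑ a, ∑ y', q s a y'
          = ∑ a, ∑ x ∈ univ.filter (fun x => σ x = s ∧ α x = a), ∑ y', p x y' :=
            Finset.sum_congr rfl fun a _ => qsum s a
        _ = _ := Ffib _ s
    rw [l1, l2, l3]
    exact hpriv y s
  have main := core q hq' hsum' hpriv'
  -- rewrite the goal into core's form
  have gPe : (∑ x, ∑ y, if y ≠ α x then p x y else 0)
      = ∑ s, (q s true false + q s false true) := by
    have hx : ∀ x, (∑ y, if y ≠ α x then p x y else 0)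
        = (if α x = true then p x false else p x true) := by
      intro x
      rcases hα : α x with _ | _ <;> simp [Fintype.sum_bool, hα]
    rw [Finset.sum_congr rfl fun x (_ : x ∈ univ) => hx x]
    rw [← allfib (fun x => if α x = true then p x false else p x true)]
    refine Finset.sum_congr rfl fun s _ => ?_
    rw [Fintype.sum_bool]
    have h1 : ∑ x ∈ univ.filter (fun x => σ x = s ∧ α x = true),
        (if α x = true then p x false else p x true) = q s true false := by
      refine Finset.sum_congr rfl fun x hx => ?_
      rw [Finset.mem_filter] at hx
      simp [hx.2.2]
    have h2 : ∑ x ∈ univ.filter (fun x => σ x = s ∧ α x = false),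
        (if α x = true then p x false else p x true) = q s false true := by
      refine Finset.sum_congr rfl fun x hx => ?_
      rw [Finset.mem_filter] at hx
      simp [hx.2.2]
    rw [h1, h2]
  have gA : (∑ x ∈ univ.filter (fun x => α x = true), ∑ y, p x y)
      = ∑ s, ∑ y, q s true y := by
    rw [Finset.sum_congr rfl fun s (_ : s ∈ univ) => qsum s true]
    exact (αfib _).symm
  have gS : ∀ s, (∑ x ∈ univ.filter (fun x => σ x = s), ∑ y, p x y)
      = ∑ a, ∑ y, q s a y := by
    intro s
    rw [Finset.sum_congr rfl fun a (_ : a ∈ univ) => qsum s a]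
    exact (Ffib _ s).symm
  have gSA : ∀ s, (∑ x ∈ univ.filter (fun x => σ x = s ∧ α x = true), ∑ y, p x y)
      = ∑ y, q s true y := fun s => (qsum s true).symm
  have gTerm : ∀ s : S, (∑ x ∈ univ.filter (fun x => σ x = s), ∑ y, p x y) *
        binEnt ((∑ x ∈ univ.filter (fun x => σ x = s ∧ α x = true), ∑ y, p x y)
          / (∑ x ∈ univ.filter (fun x => σ x = s), ∑ y, p x y))
      = (∑ a, ∑ y, q s a y) *
        binEnt ((∑ y, q s true y) / (∑ a, ∑ y, q s a y)) := fun s => by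
    rw [gS s, gSA s]
  rw [gPe, gA, Finset.sum_congr rfl fun s (_ : s ∈ univ) => gTerm s]
  exact main
end

section
/- Under perfect privacy (Y independent of X_S) and the Markov chain X_S → X → Y, the mutual information satisfies I(A; Y) ≤ H(A | X_S), where A is a deterministic function of X. -/
open Finset

lemma log_split (a b : ℝ) (ha : 0 ≤ a) (hb : 0 ≤ b) :
    (a * b) * Real.log (a * b) = a * b * Real.log a + a * b * Real.log b := by
  rcases eq_or_lt_of_le ha with h | h
  · simp [← h]
  rcases eq_or_lt_of_le hb with h' | h'
  · simp [← h']
  rw [Real.log_mul h.ne' h'.ne']; ring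

lemma phi_superadd (a b : ℝ) (ha : 0 ≤ a) (hb : 0 ≤ b) :
    a * Real.log a + b * Real.log b ≤ (a + b) * Real.log (a + b) := by
  have h1 : a * Real.log a ≤ a * Real.log (a + b) := by
    rcases eq_or_lt_of_le ha with h | h
    · simp [← h]
    · exact mul_le_mul_of_nonneg_left (Real.log_le_log h (by linarith)) ha
  have h2 : b * Real.log b ≤ b * Real.log (a + b) := by
    rcases eq_or_lt_of_le hb with h | h
    · simp [← h]
    · exact mul_le_mul_of_nonneg_left (Real.log_le_log h (by linarith)) hb
  nlinarith [h1, h2]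

lemma binEnt_expand (a b m : ℝ) (ha : 0 ≤ a) (hb : 0 ≤ b) (hm : m = a + b) :
    m * binEnt (a / m) = m * Real.log m - a * Real.log a - b * Real.log b := by
  subst hm
  rcases eq_or_lt_of_le (add_nonneg ha hb) with h | h
  · have ha0 : a = 0 := by linarith
    have hb0 : b = 0 := by linarith
    simp [ha0, hb0, binEnt]
  · have hne : a + b ≠ 0 := h.ne'
    have h1 : 1 - a / (a + b) = b / (a + b) := by field_simp; ring
    have ha' : a * Real.log (a / (a + b)) = a * Real.log a - a * Real.log (a + b) := by
      rcases eq_or_lt_of_le ha with h2 | h2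
      · simp [← h2]
      · rw [Real.log_div h2.ne' hne]; ring
    have hb' : b * Real.log (b / (a + b)) = b * Real.log b - b * Real.log (a + b) := by
      rcases eq_or_lt_of_le hb with h2 | h2
      · simp [← h2]
      · rw [Real.log_div h2.ne' hne]; ring
    unfold binEnt
    rw [h1]
    have e : (a + b) * (-(a / (a + b) * Real.log (a / (a + b))) - b / (a + b) * Real.log (b / (a + b)))
        = -(a * Real.log (a / (a + b))) - b * Real.log (b / (a + b)) := by
      field_simp
    rw [e, ha', hb']; ring

lemma gibbs_term (w u : ℝ) (hw : 0 ≤ w) (hu : 0 ≤ u) (hpos : 0 < w → 0 < u) :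
    w * (Real.log u - Real.log w) ≤ u - w := by
  rcases eq_or_lt_of_le hw with h | h
  · simpa [← h] using hu
  · have hu' := hpos h
    rw [← Real.log_div hu'.ne' h.ne']
    have h2 : Real.log (u / w) ≤ u / w - 1 := Real.log_le_sub_one_of_pos (div_pos hu' h)
    have h3 : w * Real.log (u / w) ≤ w * (u / w - 1) := mul_le_mul_of_nonneg_left h2 hw
    have h4 : w * (u / w - 1) = u - w := by field_simp
    linarith

lemma gibbs_sum {S Y : Type} [Fintype S] [Fintype Y] (h : S → Y → ℝ)
    (hh : ∀ s y, 0 ≤ h s y) :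
    (∑ y, (∑ s, h s y) * Real.log (∑ s, h s y))
      + (∑ s, (∑ y, h s y) * Real.log (∑ y, h s y))
    ≤ (∑ s, ∑ y, h s y) * Real.log (∑ s, ∑ y, h s y)
      + ∑ s, ∑ y, h s y * Real.log (h s y) := by
  set m := ∑ s, ∑ y, h s y with hm
  set P : Y → ℝ := fun y => ∑ s, h s y with hP
  set G : S → ℝ := fun s => ∑ y, h s y with hG
  have hPnn : ∀ y, 0 ≤ P y := fun y => Finset.sum_nonneg fun s _ => hh s y
  have hGnn : ∀ s, 0 ≤ G s := fun s => Finset.sum_nonneg fun y _ => hh s y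
  have hmnn : 0 ≤ m := Finset.sum_nonneg fun s _ => hGnn s
  have hsumP : ∑ y, P y = m := Finset.sum_comm
  have hsumG : ∑ s, G s = m := rfl
  have hGLm : ∀ s, G s ≤ m := fun s =>
    Finset.single_le_sum (fun s' _ => hGnn s') (mem_univ s)
  have hhG : ∀ s y, h s y ≤ G s := fun s y =>
    Finset.single_le_sum (fun y' _ => hh s y') (mem_univ y)
  have hhP : ∀ s y, h s y ≤ P y := fun s y =>
    Finset.single_le_sum (fun s' _ => hh s' y) (mem_univ s)
  -- termwise bound
  have claim1 : ∀ s, ∀ y,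
      h s y * Real.log (P y) + h s y * Real.log (G s) - h s y * Real.log m
        - h s y * Real.log (h s y) ≤ G s * P y / m - h s y := by
    intro s y
    have hunn : (0:ℝ) ≤ G s * P y / m := div_nonneg (mul_nonneg (hGnn s) (hPnn y)) hmnn
    rcases eq_or_lt_of_le (hh s y) with hz | hz
    · rw [← hz]; simpa using hunn
    · have hGpos : 0 < G s := lt_of_lt_of_le hz (hhG s y)
      have hPpos : 0 < P y := lt_of_lt_of_le hz (hhP s y)
      have hmpos : 0 < m := lt_of_lt_of_le hGpos (hGLm s)
      have hu : 0 < G s * P y / m := div_pos (mul_pos hGpos hPpos) hmpos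
      have hlog : Real.log (G s * P y / m)
          = Real.log (G s) + Real.log (P y) - Real.log m := by
        rw [Real.log_div (mul_pos hGpos hPpos).ne' hmpos.ne',
          Real.log_mul hGpos.ne' hPpos.ne']
      have hgb := gibbs_term (h s y) (G s * P y / m) (hh s y) hunn (fun _ => hu)
      rw [hlog] at hgb
      have e : h s y * (Real.log (G s) + Real.log (P y) - Real.log m - Real.log (h s y))
          = h s y * Real.log (P y) + h s y * Real.log (G s) - h s y * Real.log m
            - h s y * Real.log (h s y) := by ring
      rw [e] at hgb
      linarith
  have claim2 : ∑ s, ∑ y, (G s * P y / m - h s y) = 0 := by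
    have e1 : ∀ s, ∑ y, G s * P y / m = G s * (m / m) := by
      intro s
      rw [show (fun y => G s * P y / m) = fun y => G s * (P y / m) from by
        funext y; ring]
      rw [← Finset.mul_sum, ← Finset.sum_div, hsumP]
    have e2 : ∑ s, ∑ y, G s * P y / m = m * (m / m) := by
      simp_rw [e1]
      rw [← Finset.sum_mul, hsumG]
    have e3 : m * (m / m) = m := by
      rcases eq_or_lt_of_le hmnn with h0 | h0
      · rw [← h0]; simp
      · field_simp
    simp only [Finset.sum_sub_distrib]
    rw [e2, e3]
    ring
  -- assemble
  have ident : ∑ s, ∑ y, (h s y * Real.log (P y) + h s y * Real.log (G s)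
      - h s y * Real.log m - h s y * Real.log (h s y))
      = (∑ y, P y * Real.log (P y)) + (∑ s, G s * Real.log (G s))
        - m * Real.log m - ∑ s, ∑ y, h s y * Real.log (h s y) := by
    have eP : ∑ y, P y * Real.log (P y) = ∑ s, ∑ y, h s y * Real.log (P y) := by
      rw [Finset.sum_comm]
      exact Finset.sum_congr rfl fun y _ => Finset.sum_mul ..
    have eG : ∑ s, G s * Real.log (G s) = ∑ s, ∑ y, h s y * Real.log (G s) :=
      Finset.sum_congr rfl fun s _ => Finset.sum_mul ..
    have eM : m * Real.log m = ∑ s, ∑ y, h s y * Real.log m := by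
      rw [hm, Finset.sum_mul]
      exact Finset.sum_congr rfl fun s _ => Finset.sum_mul ..
    rw [eP, eG, eM]
    simp only [Finset.sum_add_distrib, Finset.sum_sub_distrib]
  have hle : ∑ s, ∑ y, (h s y * Real.log (P y) + h s y * Real.log (G s)
      - h s y * Real.log m - h s y * Real.log (h s y))
      ≤ ∑ s, ∑ y, (G s * P y / m - h s y) :=
    Finset.sum_le_sum fun s _ => Finset.sum_le_sum fun y _ => claim1 s y
  rw [ident, claim2] at hle
  linarith

lemma key_ineq {S Y : Type} [Fintype S] [Fintype Y]
    (g : S → Bool → Y → ℝ) (hg : ∀ s a y, 0 ≤ g s a y)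
    (hind : ∀ s y, g s false y + g s true y
      = (∑ s', (g s' false y + g s' true y)) * (∑ y', (g s false y' + g s true y')))
    (hQ1 : ∑ y, ∑ s, (g s false y + g s true y) = 1)
    (hR1 : ∑ s, ∑ y, (g s false y + g s true y) = 1) :
    (∑ y, (∑ s, g s false y) * Real.log (∑ s, g s false y))
    + (∑ y, (∑ s, g s true y) * Real.log (∑ s, g s true y))
    + (∑ s, (∑ y, g s false y) * Real.log (∑ y, g s false y))
    + (∑ s, (∑ y, g s true y) * Real.log (∑ y, g s true y))
    ≤ (∑ s, ∑ y, g s false y) * Real.log (∑ s, ∑ y, g s false y)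
    + (∑ s, ∑ y, g s true y) * Real.log (∑ s, ∑ y, g s true y)
    + (∑ y, (∑ s, (g s false y + g s true y))
        * Real.log (∑ s, (g s false y + g s true y)))
    + (∑ s, (∑ y, (g s false y + g s true y))
        * Real.log (∑ y, (g s false y + g s true y))) := by
  set Q : Y → ℝ := fun y => ∑ s, (g s false y + g s true y) with hQ
  set R : S → ℝ := fun s => ∑ y, (g s false y + g s true y) with hR
  have hQnn : ∀ y, 0 ≤ Q y := fun y =>
    Finset.sum_nonneg fun s _ => add_nonneg (hg s false y) (hg s true y)
  have hRnn : ∀ s, 0 ≤ R s :=  fun s =>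
    Finset.sum_nonneg fun y _ => add_nonneg (hg s false y) (hg s true y)
  have hQs : ∑ y, Q y = 1 := hQ1
  have hRs : ∑ s, R s = 1 := hR1
  -- step 1: Gibbs for each value of a
  have gF := gibbs_sum (fun s y => g s false y) (fun s y => hg s false y)
  have gT := gibbs_sum (fun s y => g s true y) (fun s y => hg s true y)
  -- step 2: superadditivity + independence
  have step2 : ∑ s, ∑ y, (g s false y * Real.log (g s false y)
      + g s true y * Real.log (g s true y))
      ≤ ∑ s, ∑ y, (Q y * R s) * Real.log (Q y * R s) := by
    apply Finset.sum_le_sum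
    intro s _
    apply Finset.sum_le_sum
    intro y _
    have h1 := phi_superadd (g s false y) (g s true y) (hg s false y) (hg s true y)
    have h2 : g s false y + g s true y = Q y * R s := hind s y
    rw [h2] at h1
    exact h1
  -- step 3: factorize
  have step3 : ∑ s, ∑ y, (Q y * R s) * Real.log (Q y * R s)
      = (∑ y, Q y * Real.log (Q y)) + (∑ s, R s * Real.log (R s)) := by
    have e : ∀ s y, (Q y * R s) * Real.log (Q y * R s)
        = R s * (Q y * Real.log (Q y)) + Q y * (R s * Real.log (R s)) := by
      intro s y
      rw [log_split (Q y) (R s) (hQnn y) (hRnn s)]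
      ring
    simp only [e, Finset.sum_add_distrib, ← Finset.mul_sum, ← Finset.sum_mul]
    rw [hQs, hRs]
    ring
  -- combine
  have split2 : ∑ s, ∑ y, (g s false y * Real.log (g s false y)
      + g s true y * Real.log (g s true y))
      = (∑ s, ∑ y, g s false y * Real.log (g s false y))
      + (∑ s, ∑ y, g s true y * Real.log (g s true y)) := by
    simp only [Finset.sum_add_distrib]
  rw [split2] at step2
  rw [step3] at step2
  linarith [gF, gT, step2]

/-- Under perfect privacy (Y independent of X_S = σ(X)) and the Markov
chain X_S → X → Y, the mutual information I(A;Y) = H(A) − H(A|Y) of the binary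
variable A = α(X) with Y satisfies I(A;Y) ≤ H(A | X_S). -/
theorem stmt8 {Ξ S Y : Type} [Fintype Ξ] [Fintype S] [Fintype Y] [DecidableEq S]
    (p : Ξ → Y → ℝ) (σ : Ξ → S) (α : Ξ → Bool)
    (hp : ∀ x y, 0 ≤ p x y) (hsum : ∑ x, ∑ y, p x y = 1)
    (hpriv : ∀ (y : Y) (s : S),
      (∑ x ∈ univ.filter (fun x => σ x = s), p x y)
        = (∑ x, p x y) * (∑ x ∈ univ.filter (fun x => σ x = s), ∑ y', p x y')) :
    binEnt (∑ x ∈ univ.filter (fun x => α x = true), ∑ y, p x y)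
      - ∑ y, (∑ x, p x y) *
          binEnt ((∑ x ∈ univ.filter (fun x => α x = true), p x y) / (∑ x, p x y))
    ≤ ∑ s, (∑ x ∈ univ.filter (fun x => σ x = s), ∑ y, p x y) *
        binEnt ((∑ x ∈ univ.filter (fun x => σ x = s ∧ α x = true), ∑ y, p x y)
          / (∑ x ∈ univ.filter (fun x => σ x = s), ∑ y, p x y)) := by
  classical
  -- splitting a filter over the Bool value of α
  have eSplit : ∀ (t : Finset Ξ) (f : Ξ → ℝ),
      (∑ x ∈ t.filter (fun x => α x = true), f x)
        + (∑ x ∈ t.filter (fun x => α x = false), f x) = ∑ x ∈ t, f x := by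
    intro t f
    have := Finset.sum_filter_add_sum_filter_not t (fun x => α x = true) f
    simpa only [Bool.not_eq_true] using this
  -- fiberwise over σ restricted to α = a
  have eFib : ∀ (f : Ξ → ℝ) (a : Bool),
      (∑ s, ∑ x ∈ univ.filter (fun x => σ x = s ∧ α x = a), f x)
        = ∑ x ∈ univ.filter (fun x => α x = a), f x := by
    intro f a
    rw [← Finset.sum_fiberwise (univ.filter (fun x => α x = a)) σ f]
    apply Finset.sum_congr rfl
    intro s _
    congr 1
    rw [Finset.filter_filter]
    apply Finset.filter_congr
    intro x _
    simp [and_comm]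
  have eFibU : ∀ (f : Ξ → ℝ),
      (∑ s, ∑ x ∈ univ.filter (fun x => σ x = s), f x) = ∑ x, f x := fun f =>
    Finset.sum_fiberwise univ σ f
  -- split filter(σ = s) by α
  have eS : ∀ (s : S) (f : Ξ → ℝ),
      (∑ x ∈ univ.filter (fun x => σ x = s ∧ α x = false), f x)
        + (∑ x ∈ univ.filter (fun x => σ x = s ∧ α x = true), f x)
        = ∑ x ∈ univ.filter (fun x => σ x = s), f x := by
    intro s f
    rw [add_comm, ← Finset.filter_filter, ← Finset.filter_filter]
    exact eSplit _ f
  have eComm : ∀ (s : S), (∑ y, ∑ x ∈ univ.filter (fun x => σ x = s), p x y)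
      = ∑ x ∈ univ.filter (fun x => σ x = s), ∑ y, p x y := fun s => Finset.sum_comm
  have eComm2 : ∀ (s : S) (a : Bool),
      (∑ y, ∑ x ∈ univ.filter (fun x => σ x = s ∧ α x = a), p x y)
      = ∑ x ∈ univ.filter (fun x => σ x = s ∧ α x = a), ∑ y, p x y :=
    fun s a => Finset.sum_comm
  have KEY := key_ineq (fun s a y => ∑ x ∈ univ.filter (fun x => σ x = s ∧ α x = a), p x y)
    (fun s a y => Finset.sum_nonneg fun x _ => hp x y)
    (by
      intro s y
      rw [eS s fun x => p x y]
      have h1 : (∑ s', ((∑ x ∈ univ.filter (fun x => σ x = s' ∧ α x = false), p x y)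
          + (∑ x ∈ univ.filter (fun x => σ x = s' ∧ α x = true), p x y))) = ∑ x, p x y := by
        simp only [eS]
        exact eFibU fun x => p x y
      have h2 : (∑ y', ((∑ x ∈ univ.filter (fun x => σ x = s ∧ α x = false), p x y')
          + (∑ x ∈ univ.filter (fun x => σ x = s ∧ α x = true), p x y')))
          = ∑ x ∈ univ.filter (fun x => σ x = s), ∑ y', p x y' := by
        simp only [eS]
        exact eComm s
      rw [h1, h2]
      exact hpriv y s)
    (by
      simp only [eS]
      have h1 : ∀ y, (∑ s, ∑ x ∈ univ.filter (fun x => σ x = s), p x y) = ∑ x, p x y :=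
        fun y => eFibU fun x => p x y
      simp only [h1]
      rw [Finset.sum_comm]
      exact hsum)
    (by
      simp only [eS, eComm]
      rw [eFibU fun x => ∑ y, p x y]
      exact hsum)
  simp only [eS, eComm2, eFib, eFibU, eComm] at KEY
  -- rewrite goal into phi form
  have hMnnT : 0 ≤ ∑ x ∈ univ.filter (fun x => α x = true), ∑ y, p x y :=
    Finset.sum_nonneg fun x _ => Finset.sum_nonneg fun y _ => hp x y
  have hMnnF : 0 ≤ ∑ x ∈ univ.filter (fun x => α x = false), ∑ y, p x y :=
    Finset.sum_nonneg fun x _ => Finset.sum_nonneg fun y _ => hp x y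
  have hM1 : (1:ℝ) = (∑ x ∈ univ.filter (fun x => α x = true), ∑ y, p x y)
      + (∑ x ∈ univ.filter (fun x => α x = false), ∑ y, p x y) := by
    rw [eSplit univ fun x => ∑ y, p x y]
    exact hsum.symm
  have hBE1 : binEnt (∑ x ∈ univ.filter (fun x => α x = true), ∑ y, p x y)
      = - ((∑ x ∈ univ.filter (fun x => α x = true), ∑ y, p x y)
            * Real.log (∑ x ∈ univ.filter (fun x => α x = true), ∑ y, p x y))
        - ((∑ x ∈ univ.filter (fun x => α x = false), ∑ y, p x y)
            * Real.log (∑ x ∈ univ.filter (fun x => α x = false), ∑ y, p x y)) := by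
    have h := binEnt_expand _ _ 1 hMnnT hMnnF hM1
    rw [div_one, one_mul, Real.log_one] at h
    linarith
  have hY : (∑ y, (∑ x, p x y) * binEnt ((∑ x ∈ univ.filter (fun x => α x = true), p x y)
        / (∑ x, p x y)))
      = ∑ y, ((∑ x, p x y) * Real.log (∑ x, p x y)
        - (∑ x ∈ univ.filter (fun x => α x = true), p x y)
            * Real.log (∑ x ∈ univ.filter (fun x => α x = true), p x y)
        - (∑ x ∈ univ.filter (fun x => α x = false), p x y)
            * Real.log (∑ x ∈ univ.filter (fun x => α x = false), p x y)) := by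
    apply Finset.sum_congr rfl
    intro y _
    exact binEnt_expand _ _ _ (Finset.sum_nonneg fun x _ => hp x y)
      (Finset.sum_nonneg fun x _ => hp x y) (eSplit univ fun x => p x y).symm
  have hS : (∑ s, (∑ x ∈ univ.filter (fun x => σ x = s), ∑ y, p x y) *
        binEnt ((∑ x ∈ univ.filter (fun x => σ x = s ∧ α x = true), ∑ y, p x y)
          / (∑ x ∈ univ.filter (fun x => σ x = s), ∑ y, p x y)))
      = ∑ s, ((∑ x ∈ univ.filter (fun x => σ x = s), ∑ y, p x y)
            * Real.log (∑ x ∈ univ.filter (fun x => σ x = s), ∑ y, p x y)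
        - (∑ x ∈ univ.filter (fun x => σ x = s ∧ α x = true), ∑ y, p x y)
            * Real.log (∑ x ∈ univ.filter (fun x => σ x = s ∧ α x = true), ∑ y, p x y)
        - (∑ x ∈ univ.filter (fun x => σ x = s ∧ α x = false), ∑ y, p x y)
            * Real.log (∑ x ∈ univ.filter (fun x => σ x = s ∧ α x = false), ∑ y, p x y)) := by
    apply Finset.sum_congr rfl
    intro s _
    refine binEnt_expand _ _ _ ?_ ?_ ?_
    · exact Finset.sum_nonneg fun x _ => Finset.sum_nonneg fun y _ => hp x y
    · exact Finset.sum_nonneg fun x _ => Finset.sum_nonneg fun y _ => hp x y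
    · rw [← eS s fun x => ∑ y, p x y]
      ring
  rw [hBE1, hY, hS]
  simp only [Finset.sum_sub_distrib]
  linarith [KEY]
end

section
/- Write A = A_L̄ · A_{L∩S} where A_L̄ = 1{X_L̄ = v_L̄} and A_{L∩S} = 1{X_{L∩S} = v_{L∩S}}. If Y is independent of X_S (hence of A_{L∩S}, which is a function of X_S) and the Markov chain X_S → X → Y holds, then I(A; Y) ≤ H(A_L̄ | A_{L∩S}). -/
open Finset

noncomputable def phiKL (t s : ℝ) : ℝ := t * Real.log (t / s)

lemma phiKL_zero (s : ℝ) : phiKL 0 s = 0 := by simp [phiKL]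

lemma phiKL_self (t : ℝ) : phiKL t t = 0 := by
  rcases eq_or_ne t 0 with h | h
  · simp [phiKL, h]
  · simp [phiKL, div_self h]

lemma phiKL_le {t s c : ℝ} (ht : 0 ≤ t) (hs : 0 ≤ s) (h : t ≤ c * s) :
    phiKL t s ≤ t * Real.log c := by
  rcases eq_or_lt_of_le ht with h0 | h0
  · simp [phiKL, ← h0]
  · have hs' : 0 < s := by
      rcases eq_or_lt_of_le hs with h1 | h1
      · rw [← h1, mul_zero] at h; linarith
      · exact h1
    have hts : 0 < t / s := div_pos h0 hs'
    have hc : t / s ≤ c := (div_le_iff₀ hs').mpr h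
    exact mul_le_mul_of_nonneg_left (Real.log_le_log hts hc) h0.le

lemma logsum2 {t1 t2 s1 s2 : ℝ} (ht1 : 0 ≤ t1) (ht2 : 0 ≤ t2) (hs1 : 0 ≤ s1) (hs2 : 0 ≤ s2)
    (h1 : s1 = 0 → t1 = 0) (h2 : s2 = 0 → t2 = 0) :
    phiKL (t1 + t2) (s1 + s2) ≤ phiKL t1 s1 + phiKL t2 s2 := by
  rcases eq_or_lt_of_le hs1 with hs1' | hs1'
  · rw [h1 hs1'.symm, ← hs1']; simp [phiKL]
  · rcases eq_or_lt_of_le hs2 with hs2' | hs2'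
    · rw [h2 hs2'.symm, ← hs2']; simp [phiKL]
    · have hS : 0 < s1 + s2 := by linarith
      have hx1 : t1 / s1 ∈ Set.Ici (0:ℝ) := Set.mem_Ici.mpr (div_nonneg ht1 hs1'.le)
      have hx2 : t2 / s2 ∈ Set.Ici (0:ℝ) := Set.mem_Ici.mpr (div_nonneg ht2 hs2'.le)
      have hw1 : (0:ℝ) ≤ s1 / (s1 + s2) := div_nonneg hs1'.le hS.le
      have hw2 : (0:ℝ) ≤ s2 / (s1 + s2) := div_nonneg hs2'.le hS.le
      have hw12 : s1 / (s1 + s2) + s2 / (s1 + s2) = 1 := by field_simp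
      have hcv := Real.convexOn_mul_log.2 hx1 hx2 hw1 hw2 hw12
      simp only [smul_eq_mul] at hcv
      have hmid : s1 / (s1 + s2) * (t1 / s1) + s2 / (s1 + s2) * (t2 / s2)
          = (t1 + t2) / (s1 + s2) := by field_simp
      rw [hmid] at hcv
      have key := mul_le_mul_of_nonneg_left hcv hS.le
      have e1 : (s1 + s2) * ((t1 + t2) / (s1 + s2) * Real.log ((t1 + t2) / (s1 + s2)))
          = phiKL (t1 + t2) (s1 + s2) := by
        rw [phiKL]; field_simp
      have e2 : (s1 + s2) * (s1 / (s1 + s2) * (t1 / s1 * Real.log (t1 / s1))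
            + s2 / (s1 + s2) * (t2 / s2 * Real.log (t2 / s2)))
          = phiKL t1 s1 + phiKL t2 s2 := by
        rw [phiKL, phiKL]; field_simp
      rw [e1, e2] at key
      exact key

lemma binEnt_nonneg {p : ℝ} (h0 : 0 ≤ p) (h1 : p ≤ 1) : 0 ≤ binEnt p := by
  unfold binEnt
  have l1 : p * Real.log p ≤ 0 :=
    mul_nonpos_of_nonneg_of_nonpos h0 (Real.log_nonpos h0 h1)
  have l2 : (1 - p) * Real.log (1 - p) ≤ 0 :=
    mul_nonpos_of_nonneg_of_nonpos (by linarith) (Real.log_nonpos (by linarith) (by linarith))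
  linarith

lemma eqY {α q a : ℝ} (hα : 0 ≤ α) (hαq : α ≤ q) (ha0 : 0 ≤ a) (ha1 : a ≤ 1)
    (hz0 : a = 0 → α = 0) (hz1 : a = 1 → α = q) :
    -(α * Real.log a) - (q - α) * Real.log (1 - a) - q * binEnt (α / q)
      = phiKL α (a * q) + phiKL (q - α) ((1 - a) * q) := by
  rcases eq_or_lt_of_le (hα.trans hαq) with hq | hq
  · have hα0 : α = 0 := le_antisymm (hαq.trans hq.symm.le) hα
    have hq0 : q = 0 := hq.symm
    simp [phiKL, hα0, hq0, binEnt]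
  · have hqne : q ≠ 0 := hq.ne'
    have h1 : q * binEnt (α / q) = -(α * Real.log (α / q)) - (q - α) * Real.log ((q - α) / q) := by
      rw [binEnt, show (1 : ℝ) - α / q = (q - α) / q by field_simp]
      field_simp
    have h2 : phiKL α (a * q) = α * Real.log (α / q) - α * Real.log a := by
      rcases eq_or_lt_of_le hα with h | h
      · simp [phiKL, ← h]
      · have ha : a ≠ 0 := fun e => by have := hz0 e; linarith
        rw [phiKL, show α / (a * q) = (α / q) / a by rw [div_div, mul_comm],
          Real.log_div (by positivity) ha]
        ring
    have h3 : phiKL (q - α) ((1 - a) * q)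
        = (q - α) * Real.log ((q - α) / q) - (q - α) * Real.log (1 - a) := by
      rcases eq_or_lt_of_le (sub_nonneg.mpr hαq) with h | h
      · simp [phiKL, ← h]
      · have ha : (1 : ℝ) - a ≠ 0 := fun e => by
          have : a = 1 := by linarith
          have := hz1 this; linarith
        rw [phiKL, show (q - α) / ((1 - a) * q) = ((q - α) / q) / (1 - a) by
            rw [div_div, mul_comm],
          Real.log_div (by positivity) ha]
        ring
    rw [h1, h2, h3]; ring

lemma entB {a w : ℝ} (ha : 0 ≤ a) (haw : a ≤ w) :
    w * binEnt (a / w) = a * Real.log (w / a) + (w - a) * Real.log (w / (w - a)) := by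
  rcases eq_or_lt_of_le (ha.trans haw) with hw | hw
  · have ha0 : a = 0 := le_antisymm (haw.trans hw.symm.le) ha
    simp [binEnt, ← hw, ha0]
  · have hwne : w ≠ 0 := hw.ne'
    have e1 : a * Real.log (w / a) = -(a * Real.log (a / w)) := by
      rcases eq_or_lt_of_le ha with h | h
      · simp [← h]
      · rw [show w / a = (a / w)⁻¹ from (inv_div a w).symm, Real.log_inv]; ring
    have e2 : (w - a) * Real.log (w / (w - a)) = -((w - a) * Real.log ((w - a) / w)) := by
      rcases eq_or_lt_of_le (sub_nonneg.mpr haw) with h | h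
      · simp [← h]
      · rw [show w / (w - a) = ((w - a) / w)⁻¹ from (inv_div (w - a) w).symm, Real.log_inv]; ring
    rw [e1, e2, binEnt, show (1 : ℝ) - a / w = (w - a) / w by field_simp]
    field_simp
    ring

lemma keyY {α q a w : ℝ} (hα0 : 0 ≤ α) (hq : 0 ≤ q) (hαq : α ≤ w * q)
    (ha0 : 0 ≤ a) (haw : a ≤ w) (hw1 : w ≤ 1)
    (hz : (w - a) * q = 0 → w * q - α = 0) (hz0 : a = 0 → α = 0) :
    phiKL α (a * q) + phiKL (q - α) ((1 - a) * q)
      ≤ α * Real.log (w / a) + (w * q - α) * Real.log (w / (w - a)) := by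
  have h1 : phiKL α (a * q) ≤ α * Real.log (w / a) := by
    rcases eq_or_lt_of_le ha0 with h | h
    · rw [hz0 h.symm]; simp [phiKL]
    · refine phiKL_le hα0 (by positivity) ?_
      rw [show w / a * (a * q) = w * q by field_simp]
      exact hαq
  have h2 : phiKL (q - α) ((1 - a) * q) ≤ (w * q - α) * Real.log (w / (w - a)) := by
    have e1 : q - α = (w * q - α) + (1 - w) * q := by ring
    have e2 : (1 - a) * q = (w - a) * q + (1 - w) * q := by ring
    have hl := logsum2 (t1 := w * q - α) (t2 := (1 - w) * q) (s1 := (w - a) * q)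
      (s2 := (1 - w) * q) (by linarith) (mul_nonneg (by linarith) hq)
      (mul_nonneg (by linarith) hq) (mul_nonneg (by linarith) hq) hz (fun h => h)
    have h3 : phiKL (w * q - α) ((w - a) * q) ≤ (w * q - α) * Real.log (w / (w - a)) := by
      rcases eq_or_lt_of_le (sub_nonneg.mpr haw) with h | h
      · have hz' : w * q - α = 0 := hz (by rw [← h]; ring)
        rw [hz']; simp [phiKL]
      · refine phiKL_le (by linarith) (by positivity) ?_
        rw [show w / (w - a) * ((w - a) * q) = w * q by field_simp]
        linarith
    rw [e1, e2]
    calc phiKL ((w * q - α) + (1 - w) * q) ((w - a) * q + (1 - w) * q)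
        ≤ phiKL (w * q - α) ((w - a) * q) + phiKL ((1 - w) * q) ((1 - w) * q) := hl
      _ = phiKL (w * q - α) ((w - a) * q) := by rw [phiKL_self]; ring
      _ ≤ (w * q - α) * Real.log (w / (w - a)) := h3
  linarith

lemma fiber_sum {Ξ S : Type} [Fintype Ξ] [Fintype S] [DecidableEq S]
    (σ : Ξ → S) (γ : S → Bool) (f : Ξ → ℝ) :
    ∑ x ∈ univ.filter (fun x => γ (σ x) = true), f x
      = ∑ s ∈ univ.filter (fun s => γ s = true), ∑ x ∈ univ.filter (fun x => σ x = s), f x := by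
  classical
  rw [← Finset.sum_fiberwise (univ.filter (fun x => γ (σ x) = true)) σ f]
  rw [Finset.sum_filter (fun s => γ s = true)
    (fun s => ∑ x ∈ univ.filter (fun x => σ x = s), f x)]
  refine Finset.sum_congr rfl fun s _ => ?_
  by_cases hs : γ s = true
  · rw [if_pos hs]
    apply Finset.sum_congr
    · ext x
      simp only [Finset.mem_filter, Finset.mem_univ, true_and]
      constructor
      · rintro ⟨_, h2⟩; exact h2
      · intro h2; exact ⟨by rw [h2]; exact hs, h2⟩
    · intros; rfl
  · rw [if_neg hs]
    apply Finset.sum_eq_zero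
    intro x hx
    simp only [Finset.mem_filter, Finset.mem_univ, true_and] at hx
    exact absurd (hx.2 ▸ hx.1) hs

/-- Write A = A_L̄ · A_{L∩S} where A_L̄ = β(X) and A_{L∩S} = γ(X_S) is a
function of X_S = σ(X).  If Y is independent of X_S and the chain X_S → X → Y holds,
then I(A;Y) ≤ H(A_L̄ | A_{L∩S}). -/
theorem stmt9 {Ξ S Y : Type} [Fintype Ξ] [Fintype S] [Fintype Y] [DecidableEq S]
    (p : Ξ → Y → ℝ) (σ : Ξ → S) (β : Ξ → Bool) (γ : S → Bool)
    (hp : ∀ x y, 0 ≤ p x y) (hsum : ∑ x, ∑ y, p x y = 1)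
    (hpriv : ∀ (y : Y) (s : S),
      (∑ x ∈ univ.filter (fun x => σ x = s), p x y)
        = (∑ x, p x y) * (∑ x ∈ univ.filter (fun x => σ x = s), ∑ y', p x y')) :
    binEnt (∑ x ∈ univ.filter (fun x => (β x && γ (σ x)) = true), ∑ y, p x y)
      - ∑ y, (∑ x, p x y) *
          binEnt ((∑ x ∈ univ.filter (fun x => (β x && γ (σ x)) = true), p x y)
            / (∑ x, p x y))
    ≤ ∑ b : Bool, (∑ x ∈ univ.filter (fun x => γ (σ x) = b), ∑ y, p x y) *
        binEnt ((∑ x ∈ univ.filter (fun x => γ (σ x) = b ∧ β x = true), ∑ y, p x y)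
          / (∑ x ∈ univ.filter (fun x => γ (σ x) = b), ∑ y, p x y)) := by
  classical
  set F : Finset Ξ := univ.filter (fun x => (β x && γ (σ x)) = true) with hF
  set G : Finset Ξ := univ.filter (fun x => γ (σ x) = true) with hG
  -- basic quantities
  set q : Y → ℝ := fun y => ∑ x, p x y with hq_def
  set α : Y → ℝ := fun y => ∑ x ∈ F, p x y with hα_def
  set aT : ℝ := ∑ x ∈ F, ∑ y, p x y with haT_def
  set w : ℝ := ∑ x ∈ G, ∑ y, p x y with hw_def
  -- nonnegativity and basic bounds
  have hq0 : ∀ y, 0 ≤ q y := fun y => Finset.sum_nonneg fun x _ => hp x y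
  have hq1 : ∑ y, q y = 1 := by rw [hq_def]; rw [← hsum]; exact (Finset.sum_comm).symm
  have hα0 : ∀ y, 0 ≤ α y := fun y => Finset.sum_nonneg fun x _ => hp x y
  have hFG : F ⊆ G := by
    intro x hx
    simp only [hF, hG, Finset.mem_filter, Finset.mem_univ, true_and, Bool.and_eq_true] at *
    exact hx.2
  have hαq : ∀ y, α y ≤ q y := fun y =>
    Finset.sum_le_sum_of_subset_of_nonneg (Finset.filter_subset _ _) fun x _ _ => hp x y
  -- privacy aggregated over the fiber of γ ∘ σ
  have hGw : ∀ y, (∑ x ∈ G, p x y) = q y * w := by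
    intro y
    rw [hG, fiber_sum σ γ (fun x => p x y), hw_def, hG, fiber_sum σ γ (fun x => ∑ y', p x y')]
    rw [Finset.mul_sum]
    exact Finset.sum_congr rfl fun s _ => hpriv y s
  have hαw : ∀ y, α y ≤ w * q y := by
    intro y
    have h1 : α y ≤ ∑ x ∈ G, p x y :=
      Finset.sum_le_sum_of_subset_of_nonneg hFG fun x _ _ => hp x y
    rw [hGw y] at h1
    linarith [h1, mul_comm (q y) w]
  have hw0 : 0 ≤ w := Finset.sum_nonneg fun x _ => Finset.sum_nonneg fun y _ => hp x y
  have hw1 : w ≤ 1 := by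
    rw [hw_def, ← hsum]
    exact Finset.sum_le_sum_of_subset_of_nonneg (Finset.filter_subset _ _)
      fun x _ _ => Finset.sum_nonneg fun y _ => hp x y
  have haT0 : 0 ≤ aT := Finset.sum_nonneg fun x _ => Finset.sum_nonneg fun y _ => hp x y
  have haTw : aT ≤ w :=
    Finset.sum_le_sum_of_subset_of_nonneg hFG fun x _ _ => Finset.sum_nonneg fun y _ => hp x y
  have haT1 : aT ≤ 1 := haTw.trans hw1
  have haTα : aT = ∑ y, α y := by rw [haT_def, hα_def]; exact Finset.sum_comm
  -- global zero conditions
  have hz0 : aT = 0 → ∀ y, α y = 0 := by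
    intro h y
    rw [haTα] at h
    exact (Finset.sum_eq_zero_iff_of_nonneg fun y _ => hα0 y).mp h y (Finset.mem_univ y)
  have hz1 : aT = 1 → ∀ y, α y = q y := by
    intro h y
    have hsz : ∑ y, (q y - α y) = 0 := by
      rw [Finset.sum_sub_distrib, hq1, ← haTα, h]; ring
    have := (Finset.sum_eq_zero_iff_of_nonneg fun y _ => sub_nonneg.mpr (hαq y)).mp hsz y
      (Finset.mem_univ y)
    linarith
  have hzz : ∀ y, (w - aT) * q y = 0 → w * q y - α y = 0 := by
    intro y h
    rcases mul_eq_zero.mp h with h | h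
    · have hwq : ∑ y, (w * q y - α y) = 0 := by
        rw [Finset.sum_sub_distrib, ← Finset.mul_sum, hq1, ← haTα]
        linarith
      exact (Finset.sum_eq_zero_iff_of_nonneg fun y _ => sub_nonneg.mpr (hαw y)).mp hwq y
        (Finset.mem_univ y)
    · have h1 := hαw y
      have h2 := hα0 y
      rw [h] at h1 ⊢
      simp only [mul_zero, zero_sub, neg_eq_zero]
      linarith
  -- Step 1: LHS = sum of phiKL terms
  have M1 : binEnt aT - ∑ y, q y * binEnt (α y / q y)
      = ∑ y, (phiKL (α y) (aT * q y) + phiKL (q y - α y) ((1 - aT) * q y)) := by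
    have e0 : binEnt aT
        = ∑ y, (-(α y * Real.log aT) - (q y - α y) * Real.log (1 - aT)) := by
      have s1 : ∑ y, α y * Real.log aT = aT * Real.log aT := by
        rw [← Finset.sum_mul, ← haTα]
      have s2 : ∑ y, (q y - α y) * Real.log (1 - aT) = (1 - aT) * Real.log (1 - aT) := by
        rw [← Finset.sum_mul, Finset.sum_sub_distrib, hq1, ← haTα]
      have e : ∑ y, (-(α y * Real.log aT) - (q y - α y) * Real.log (1 - aT))
          = -(aT * Real.log aT) - (1 - aT) * Real.log (1 - aT) := by
        rw [Finset.sum_sub_distrib, Finset.sum_neg_distrib, s1, s2]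
      rw [e, binEnt]
    rw [e0, ← Finset.sum_sub_distrib]
    refine Finset.sum_congr rfl fun y _ => ?_
    exact eqY (hα0 y) (hαq y) haT0 haT1 (fun h => hz0 h y) (fun h => hz1 h y)
  -- Step 2: bound each term
  have M2 : ∑ y, (phiKL (α y) (aT * q y) + phiKL (q y - α y) ((1 - aT) * q y))
      ≤ ∑ y, (α y * Real.log (w / aT) + (w * q y - α y) * Real.log (w / (w - aT))) := by
    refine Finset.sum_le_sum fun y _ => ?_
    exact keyY (hα0 y) (hq0 y) (hαw y) haT0 haTw hw1 (hzz y) (fun h => hz0 h y)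
  -- Step 3: evaluate the bound
  have M3 : ∑ y, (α y * Real.log (w / aT) + (w * q y - α y) * Real.log (w / (w - aT)))
      = w * binEnt (aT / w) := by
    have s1 : ∑ y, α y * Real.log (w / aT) = aT * Real.log (w / aT) := by
      rw [← Finset.sum_mul, ← haTα]
    have s2 : ∑ y, (w * q y - α y) * Real.log (w / (w - aT))
        = (w - aT) * Real.log (w / (w - aT)) := by
      rw [← Finset.sum_mul, Finset.sum_sub_distrib, ← Finset.mul_sum, hq1, mul_one, ← haTα]
    rw [Finset.sum_add_distrib, s1, s2, entB haT0 haTw]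
  -- Step 4: RHS ≥ w * binEnt (aT / w)
  have hFeq : univ.filter (fun x => γ (σ x) = true ∧ β x = true) = F := by
    rw [hF]; apply Finset.filter_congr; intro x _
    simp only [Bool.and_eq_true]; tauto
  have M4 : w * binEnt (aT / w)
      ≤ ∑ b : Bool, (∑ x ∈ univ.filter (fun x => γ (σ x) = b), ∑ y, p x y) *
          binEnt ((∑ x ∈ univ.filter (fun x => γ (σ x) = b ∧ β x = true), ∑ y, p x y)
            / (∑ x ∈ univ.filter (fun x => γ (σ x) = b), ∑ y, p x y)) := by
    rw [Fintype.sum_bool, hFeq]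
    have hfalse : 0 ≤ (∑ x ∈ univ.filter (fun x => γ (σ x) = false), ∑ y, p x y) *
        binEnt ((∑ x ∈ univ.filter (fun x => γ (σ x) = false ∧ β x = true), ∑ y, p x y)
          / (∑ x ∈ univ.filter (fun x => γ (σ x) = false), ∑ y, p x y)) := by
      have hd0 : 0 ≤ ∑ x ∈ univ.filter (fun x => γ (σ x) = false), ∑ y, p x y :=
        Finset.sum_nonneg fun x _ => Finset.sum_nonneg fun y _ => hp x y
      have hn0 : 0 ≤ ∑ x ∈ univ.filter (fun x => γ (σ x) = false ∧ β x = true), ∑ y, p x y :=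
        Finset.sum_nonneg fun x _ => Finset.sum_nonneg fun y _ => hp x y
      have hnd : (∑ x ∈ univ.filter (fun x => γ (σ x) = false ∧ β x = true), ∑ y, p x y)
          ≤ ∑ x ∈ univ.filter (fun x => γ (σ x) = false), ∑ y, p x y := by
        apply Finset.sum_le_sum_of_subset_of_nonneg
        · intro x hx
          simp only [Finset.mem_filter, Finset.mem_univ, true_and] at *
          exact hx.1
        · exact fun x _ _ => Finset.sum_nonneg fun y _ => hp x y
      apply mul_nonneg hd0
      apply binEnt_nonneg (div_nonneg hn0 hd0)
      rcases eq_or_lt_of_le hd0 with h | h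
      · rw [← h]; simp
      · exact (div_le_one h).mpr hnd
    have htrue : (∑ x ∈ G, ∑ y, p x y) * binEnt ((∑ x ∈ F, ∑ y, p x y)
        / (∑ x ∈ G, ∑ y, p x y)) = w * binEnt (aT / w) := by rw [← hw_def, ← haT_def]
    rw [hG] at htrue
    rw [htrue]
    linarith
  -- combine
  calc binEnt aT - ∑ y, q y * binEnt (α y / q y)
      = ∑ y, (phiKL (α y) (aT * q y) + phiKL (q y - α y) ((1 - aT) * q y)) := M1
    _ ≤ ∑ y, (α y * Real.log (w / aT) + (w * q y - α y) * Real.log (w / (w - aT))) := M2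
    _ = w * binEnt (aT / w) := M3
    _ ≤ _ := M4
end
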